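/- Let J be a 3×3 real matrix all of whose complex eigenvalues (roots of its characteristic polynomial over ℂ) have negative real part. Then trace J < 0, trace(adjugate J) > 0, det J < 0, and (trace J)·(trace(adjugate J)) < det J. -/

import Mathlib

open Matrix Polynomial

private lemma charpoly_fin3 (M : Matrix (Fin 3) (Fin 3) ℝ) :
    M.charpoly = X^3 - C (M.trace) * X^2 + C (M.adjugate.trace) * X - C (M.det) := by
  rw [Matrix.charpoly, Matrix.det_fin_three, Matrix.trace_fin_three,
    Matrix.adjugate_fin_three, Matrix.det_fin_three]
  simp [charmatrix_apply, Matrix.trace_fin_three]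
  ring

private lemma pair_case (t b d x1 y1 x3 : ℝ)
    (hx1 : x1 < 0) (hx3 : x3 < 0)
    (ht : t = x1 + x1 + x3)
    (hb : b = (x1*x1 + y1*y1) + 2*x1*x3)
    (hd : d = x3*(x1*x1 + y1*y1)) :
    t < 0 ∧ 0 < b ∧ d < 0 ∧ t * b < d := by
  subst ht hb hd
  refine ⟨by linarith, ?_, ?_, ?_⟩
  · nlinarith [sq_nonneg y1, mul_pos (neg_pos.2 hx1) (neg_pos.2 hx3)]
  · nlinarith [mul_nonpos_of_nonpos_of_nonneg hx3.le (sq_nonneg y1),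
      mul_neg_of_neg_of_pos hx3 (mul_pos (neg_pos.2 hx1) (neg_pos.2 hx1))]
  · nlinarith [mul_neg_of_neg_of_pos hx1 (show (0:ℝ) < (x1+x3)^2 by
        nlinarith [mul_pos (show (0:ℝ) < -(x1+x3) by linarith) (show (0:ℝ) < -(x1+x3) by linarith)]),
      mul_nonpos_of_nonpos_of_nonneg hx1.le (sq_nonneg y1)]

private lemma real_case (t b d x1 x2 x3 : ℝ)
    (hx1 : x1 < 0) (hx2 : x2 < 0) (hx3 : x3 < 0)
    (ht : t = x1 + x2 + x3)
    (hb : b = x1*x2 + x1*x3 + x2*x3)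
    (hd : d = x1*x2*x3) :
    t < 0 ∧ 0 < b ∧ d < 0 ∧ t * b < d := by
  subst ht hb hd
  have p12 := mul_pos (neg_pos.2 hx1) (neg_pos.2 hx2)
  have p13 := mul_pos (neg_pos.2 hx1) (neg_pos.2 hx3)
  have p23 := mul_pos (neg_pos.2 hx2) (neg_pos.2 hx3)
  refine ⟨by linarith, by nlinarith, by nlinarith, ?_⟩
  nlinarith [mul_neg_of_neg_of_pos (show x1+x2 < 0 by linarith)
      (mul_pos (show (0:ℝ) < -(x1+x3) by linarith) (show (0:ℝ) < -(x2+x3) by linarith))]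

theorem stable_matrix_routh_hurwitz
    (J : Matrix (Fin 3) (Fin 3) ℝ)
    (hJ : ∀ z ∈ (J.charpoly.map (algebraMap ℝ ℂ)).roots, z.re < 0) :
    J.trace < 0 ∧ 0 < J.adjugate.trace ∧ J.det < 0 ∧
      J.trace * J.adjugate.trace < J.det := by
  set p := J.charpoly.map (algebraMap ℝ ℂ) with hp
  have hm : p.Monic := J.charpoly_monic.map _
  have hd : p.natDegree = 3 := by
    rw [hp, (J.charpoly_monic).natDegree_map, J.charpoly_natDegree_eq_dim]
    simp
  have hsp : p.Splits := IsAlgClosed.splits p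
  have hcard : p.roots.card = 3 := by
    have := hsp.natDegree_eq_card_roots
    simpa [hd] using this.symm
  obtain ⟨z1, z2, z3, hz⟩ := Multiset.card_eq_three.mp hcard
  have hprod : p = (X - C z1) * (X - C z2) * (X - C z3) := by
    have := hsp.eq_prod_roots_of_monic hm
    rw [hz] at this
    simpa [mul_assoc] using this
  have hpform : p = X^3 - C ((J.trace : ℂ)) * X^2 + C ((J.adjugate.trace : ℂ)) * X
      - C ((J.det : ℂ)) := by
    rw [hp, charpoly_fin3]
    simp [Polynomial.map_ofNat]
  have hexp : (X - C z1) * (X - C z2) * (X - C z3) =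
      X^3 - C (z1 + z2 + z3) * X^2 + C (z1*z2 + z1*z3 + z2*z3) * X - C (z1*z2*z3) := by
    simp only [C_add, C_mul]
    ring
  have heq : (X^3 - C ((J.trace : ℂ)) * X^2 + C ((J.adjugate.trace : ℂ)) * X
      - C ((J.det : ℂ)) : ℂ[X]) =
      X^3 - C (z1 + z2 + z3) * X^2 + C (z1*z2 + z1*z3 + z2*z3) * X - C (z1*z2*z3) := by
    rw [← hpform, hprod, hexp]
  have h1 : (J.trace : ℂ) = z1 + z2 + z3 := by
    have := congrArg (fun q => Polynomial.coeff q 2) heq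
    simp only [coeff_sub, coeff_add, coeff_C_mul, coeff_X_pow, coeff_C, coeff_X] at this
    simp at this
    linear_combination -this
  have h2 : (J.adjugate.trace : ℂ) = z1*z2 + z1*z3 + z2*z3 := by
    have := congrArg (fun q => Polynomial.coeff q 1) heq
    simp only [coeff_sub, coeff_add, coeff_C_mul, coeff_X_pow, coeff_C, coeff_X] at this
    simpa using this
  have h3 : (J.det : ℂ) = z1*z2*z3 := by
    have := congrArg (fun q => Polynomial.coeff q 0) heq
    simp only [coeff_sub, coeff_add, coeff_C_mul, coeff_X_pow, coeff_C, coeff_X] at this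
    simpa using this
  have hm1 : z1 ∈ p.roots := by rw [hz]; simp
  have hm2 : z2 ∈ p.roots := by rw [hz]; simp
  have hm3 : z3 ∈ p.roots := by rw [hz]; simp
  have hx1 : z1.re < 0 := hJ z1 hm1
  have hx2 : z2.re < 0 := hJ z2 hm2
  have hx3 : z3.re < 0 := hJ z3 hm3
  have hconj : p.roots.map (starRingEnd ℂ) = p.roots := by
    have h1' : p.map (starRingEnd ℂ) = p := by
      rw [hp, Polynomial.map_map]
      congr 1
      ext x
      simp
    conv_rhs => rw [← h1']
    exact (hsp.roots_map_of_injective (RingHom.injective _)).symm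
  have hcmem : ∀ z ∈ p.roots, (starRingEnd ℂ) z ∈ p.roots := by
    intro z hzm
    rw [← hconj]
    exact Multiset.mem_map_of_mem _ hzm
  have ht : J.trace = z1.re + z2.re + z3.re := by
    have := congrArg Complex.re h1; simpa using this
  have him : z1.im + z2.im + z3.im = 0 := by
    have := congrArg Complex.im h1; simp at this; linarith
  have hb : J.adjugate.trace = (z1.re*z2.re - z1.im*z2.im) + (z1.re*z3.re - z1.im*z3.im)
      + (z2.re*z3.re - z2.im*z3.im) := by
    have := congrArg Complex.re h2; simpa [Complex.mul_re] using this
  have hdet : J.det = (z1.re*z2.re - z1.im*z2.im)*z3.re - (z1.re*z2.im + z1.im*z2.re)*z3.im := by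
    have := congrArg Complex.re h3; simpa [Complex.mul_re, Complex.mul_im] using this
  have hc1 : (starRingEnd ℂ) z1 = z1 ∨ (starRingEnd ℂ) z1 = z2 ∨ (starRingEnd ℂ) z1 = z3 := by
    have := hcmem z1 hm1; rw [hz] at this; simpa using this
  rcases hc1 with hc | hc | hc
  · have hy1 : z1.im = 0 := by
      have := congrArg Complex.im hc; simp at this; linarith
    have hc2 : (starRingEnd ℂ) z2 = z1 ∨ (starRingEnd ℂ) z2 = z2 ∨ (starRingEnd ℂ) z2 = z3 := by
      have := hcmem z2 hm2; rw [hz] at this; simpa using this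
    rcases hc2 with hc2 | hc2 | hc2
    · have hy2 : z2.im = 0 := by
        have := congrArg Complex.im hc2; simp at this; linarith
      have hy3 : z3.im = 0 := by linarith
      exact real_case _ _ _ _ _ _ hx1 hx2 hx3 ht (by rw [hb, hy1, hy2, hy3]; try ring)
        (by rw [hdet, hy1, hy2, hy3]; try ring)
    · have hy2 : z2.im = 0 := by
        have := congrArg Complex.im hc2; simp at this; linarith
      have hy3 : z3.im = 0 := by linarith
      exact real_case _ _ _ _ _ _ hx1 hx2 hx3 ht (by rw [hb, hy1, hy2, hy3]; try ring)
        (by rw [hdet, hy1, hy2, hy3]; try ring)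
    · -- z3 = conj z2 : pair (z2,z3), z1 real
      have hxx : z3.re = z2.re := by
        have := congrArg Complex.re hc2; simpa using this.symm
      have hyy : z3.im = -z2.im := by
        have := congrArg Complex.im hc2; simp at this; linarith
      exact pair_case _ _ _ z2.re z2.im z1.re hx2 hx1
        (by rw [ht, hxx]; try ring) (by rw [hb, hxx, hyy, hy1]; try ring)
        (by rw [hdet, hxx, hyy, hy1]; try ring)
  · -- z2 = conj z1, z3 real
    have hxx : z2.re = z1.re := by
      have := congrArg Complex.re hc; simpa using this.symm
    have hyy : z2.im = -z1.im := by
      have := congrArg Complex.im hc; simp at this; linarith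
    have hy3 : z3.im = 0 := by
      rw [hyy] at him; linarith
    exact pair_case _ _ _ z1.re z1.im z3.re hx1 hx3
      (by rw [ht, hxx]; try ring) (by rw [hb, hxx, hyy, hy3]; try ring)
      (by rw [hdet, hxx, hyy, hy3]; try ring)
  · -- z3 = conj z1, z2 real
    have hxx : z3.re = z1.re := by
      have := congrArg Complex.re hc; simpa using this.symm
    have hyy : z3.im = -z1.im := by
      have := congrArg Complex.im hc; simp at this; linarith
    have hy2 : z2.im = 0 := by
      rw [hyy] at him; linarith
    exact pair_case _ _ _ z1.re z1.im z2.re hx1 hx2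
      (by rw [ht, hxx]; try ring) (by rw [hb, hxx, hyy, hy2]; try ring)
      (by rw [hdet, hxx, hyy, hy2]; try ring)
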